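/- The subspace spanned by S2, S1, T, L2, L1 in the 7-dimensional Lie algebra with brackets [T,L2]=4S2, [T,L1]=4S1, [L2,L1]=−4T (other brackets among these five being zero) is a Lie subalgebra isomorphic to the Lie algebra n_5^4, which has basis x1,...,x5 with nonzero brackets [x1,x2]=x3, [x1,x3]=x4, [x2,x3]=x5. -/
import Mathlib


/-- The bracket of the 5-dimensional real Lie algebra `n_5^4`:
`[x1,x2]=x3`, `[x1,x3]=x4`, `[x2,x3]=x5` (indices `0,…,4`). -/
def brN (x y : Fin 5 → ℝ) : Fin 5 → ℝ :=
  ![0, 0, x 0 * y 1 - x 1 * y 0, x 0 * y 2 - x 2 * y 0, x 1 * y 2 - x 2 * y 1]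

/-- The bracket of the abstract 7-dimensional Lie algebra with basis
`S2, S1, T, L2, L1, D, R` (indices `0,…,6`) and nonzero brackets (among the
first five) `[T,L2]=4S2`, `[T,L1]=4S1`, `[L2,L1]=−4T`. -/
def br7 (x y : Fin 7 → ℝ) : Fin 7 → ℝ :=
  ![4 * (x 2 * y 3 - x 3 * y 2), 4 * (x 2 * y 4 - x 4 * y 2),
    -4 * (x 3 * y 4 - x 4 * y 3), 0, 0, 0, 0]

lemma v7_5 (a b c d e f g : ℝ) : (![a,b,c,d,e,f,g] : Fin 7 → ℝ) 5 = f := rfl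
lemma v7_6 (a b c d e f g : ℝ) : (![a,b,c,d,e,f,g] : Fin 7 → ℝ) 6 = g := rfl

/-- Any vector with zero last-two coordinates lies in the span. -/
lemma mem_span5 (a b c d e : ℝ) :
    (![a, b, c, d, e, 0, 0] : Fin 7 → ℝ) ∈
      Submodule.span ℝ ({Pi.single 0 1, Pi.single 1 1, Pi.single 2 1,
        Pi.single 3 1, Pi.single 4 1} : Set (Fin 7 → ℝ)) := by
  have h : (![a, b, c, d, e, 0, 0] : Fin 7 → ℝ) =
      a • (Pi.single 0 1 : Fin 7 → ℝ) + b • (Pi.single 1 1 : Fin 7 → ℝ) +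
      c • (Pi.single 2 1 : Fin 7 → ℝ) + d • (Pi.single 3 1 : Fin 7 → ℝ) +
      e • (Pi.single 4 1 : Fin 7 → ℝ) := by
    funext i
    fin_cases i <;> simp [Pi.single_apply, v7_5, v7_6]
  rw [h]
  refine Submodule.add_mem _ (Submodule.add_mem _ (Submodule.add_mem _
    (Submodule.add_mem _ ?_ ?_) ?_) ?_) ?_ <;>
    exact Submodule.smul_mem _ _ (Submodule.subset_span (by simp))

def fmap : (Fin 5 → ℝ) →ₗ[ℝ] (Fin 7 → ℝ) where
  toFun x := ![16 * x 3, 16 * x 4, -4 * x 2, x 0, x 1, 0, 0]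
  map_add' x y := by funext i; fin_cases i <;> (simp [v7_5, v7_6]; try ring)
  map_smul' c x := by funext i; fin_cases i <;> (simp [v7_5, v7_6]; try ring)

/-- The subspace spanned by `S2, S1, T, L2, L1` is a Lie subalgebra, and it is
isomorphic to `n_5^4`: there is an injective linear map of `n_5^4` into the
7-dimensional algebra, respecting brackets, whose range is this subspace. -/
theorem span5_subalgebra_iso_n54 :
    (∀ u v : Fin 7 → ℝ,
      u ∈ Submodule.span ℝ ({Pi.single 0 1, Pi.single 1 1, Pi.single 2 1,
        Pi.single 3 1, Pi.single 4 1} : Set (Fin 7 → ℝ)) →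
      v ∈ Submodule.span ℝ ({Pi.single 0 1, Pi.single 1 1, Pi.single 2 1,
        Pi.single 3 1, Pi.single 4 1} : Set (Fin 7 → ℝ)) →
      br7 u v ∈ Submodule.span ℝ ({Pi.single 0 1, Pi.single 1 1, Pi.single 2 1,
        Pi.single 3 1, Pi.single 4 1} : Set (Fin 7 → ℝ))) ∧
    (∃ f : (Fin 5 → ℝ) →ₗ[ℝ] (Fin 7 → ℝ),
      Function.Injective f ∧
      LinearMap.range f =
        Submodule.span ℝ ({Pi.single 0 1, Pi.single 1 1, Pi.single 2 1,
          Pi.single 3 1, Pi.single 4 1} : Set (Fin 7 → ℝ)) ∧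
      ∀ x y : Fin 5 → ℝ, f (brN x y) = br7 (f x) (f y)) := by
  constructor
  · intro u v _ _
    exact mem_span5 _ _ _ _ _
  · refine ⟨fmap, ?_, ?_, ?_⟩
    · have hli : Function.LeftInverse
          (fun (w : Fin 7 → ℝ) => ![w 3, w 4, -(1/4) * w 2, (1/16) * w 0, (1/16) * w 1])
          fmap := by
        intro x
        funext i
        fin_cases i <;> (simp [fmap, v7_5, v7_6]; try ring)
      exact hli.injective
    · apply le_antisymm
      · rintro _ ⟨x, rfl⟩
        exact mem_span5 _ _ _ _ _
      · rw [Submodule.span_le]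
        rintro w hw
        simp only [Set.mem_insert_iff, Set.mem_singleton_iff] at hw
        rcases hw with rfl | rfl | rfl | rfl | rfl
        · exact ⟨![0, 0, 0, 1/16, 0], by funext i; fin_cases i <;> (simp [fmap, Pi.single_apply, v7_5, v7_6]; try norm_num)⟩
        · exact ⟨![0, 0, 0, 0, 1/16], by funext i; fin_cases i <;> (simp [fmap, Pi.single_apply, v7_5, v7_6]; try norm_num)⟩
        · exact ⟨![0, 0, -1/4, 0, 0], by funext i; fin_cases i <;> (simp [fmap, Pi.single_apply, v7_5, v7_6]; try norm_num)⟩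
        · exact ⟨![1, 0, 0, 0, 0], by funext i; fin_cases i <;> simp [fmap, Pi.single_apply, v7_5, v7_6]⟩
        · exact ⟨![0, 1, 0, 0, 0], by funext i; fin_cases i <;> simp [fmap, Pi.single_apply, v7_5, v7_6]⟩
    · intro x y
      funext i
      fin_cases i <;> (simp [fmap, brN, br7, v7_5, v7_6]; try ring)
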